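/- Let X be a real n×p matrix, Y ∈ ℝⁿ, and λ ≥ 0. If λ ≥ max₁≤i≤p |(Xᵀ Y)ᵢ|, then the zero vector minimizes the lasso criterion: L(0) ≤ L(β) for every β ∈ ℝᵖ, where L(β) = ½‖Y − Xβ‖₂² + λ‖β‖₁. -/
import Mathlib


open Matrix BigOperators

theorem zero_minimizes_lasso_of_large_lambda {n p : ℕ}
    (X : Matrix (Fin n) (Fin p) ℝ) (Y : Fin n → ℝ)
    (lam : ℝ) (hlam : 0 ≤ lam)
    (hbig : ∀ i : Fin p, |Xᵀ.mulVec Y i| ≤ lam)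
    (L : (Fin p → ℝ) → ℝ)
    (hL : ∀ β, L β = (1 / 2) * ∑ i, (Y i - X.mulVec β i) ^ 2 + lam * ∑ j, |β j|) :
    ∀ β : Fin p → ℝ, L 0 ≤ L β := by
  intro β
  rw [hL, hL]
  have h0 : X.mulVec (0 : Fin p → ℝ) = 0 := by simp
  rw [h0]
  set v : Fin n → ℝ := X.mulVec β with hv
  have hdot : ∑ i, Y i * v i = ∑ j, Xᵀ.mulVec Y j * β j := by
    have : Y ⬝ᵥ X.mulVec β = Xᵀ.mulVec Y ⬝ᵥ β := by
      rw [dotProduct_mulVec, Matrix.mulVec_transpose]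
    simpa [dotProduct, hv] using this
  have hS : ∑ i, Y i * v i ≤ lam * ∑ j, |β j| := by
    rw [hdot, Finset.mul_sum]
    apply Finset.sum_le_sum
    intro j _
    calc Xᵀ.mulVec Y j * β j ≤ |Xᵀ.mulVec Y j * β j| := le_abs_self _
      _ = |Xᵀ.mulVec Y j| * |β j| := abs_mul _ _
      _ ≤ lam * |β j| := by
          exact mul_le_mul_of_nonneg_right (hbig j) (abs_nonneg _)
  have hQ : 0 ≤ ∑ i, v i ^ 2 := Finset.sum_nonneg fun i _ => sq_nonneg _
  have hexp : ∑ i, (Y i - v i) ^ 2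
      = ∑ i, Y i ^ 2 - 2 * ∑ i, Y i * v i + ∑ i, v i ^ 2 := by
    have h : ∀ i : Fin n, (Y i - v i) ^ 2 = Y i ^ 2 - 2 * (Y i * v i) + v i ^ 2 :=
      fun i => by ring
    simp [h, Finset.sum_add_distrib, Finset.sum_sub_distrib, Finset.mul_sum]
  rw [hexp]
  simp only [Pi.zero_apply, sub_zero, abs_zero, Finset.sum_const_zero, mul_zero]
  nlinarith [hS, hQ]
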